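/- arXiv:math/9412215 — 2 statements merged into one kernel-verified Lean document; each statement's English description precedes it below -/
import Mathlib

section
/- A φ-function F is dilatory if and only if its lower Matuszewska–Orlicz index satisfies p_m(F) > 0. -/
open MeasureTheory Set Filter Topology
open scoped ENNReal NNReal

noncomputable section

/-- A φ-function on `[0,∞)`: strictly increasing, continuous, `F 0 = 0`, `F t → ∞`. -/
def IsPhiFun (F : ℝ → ℝ) : Prop :=
  F 0 = 0 ∧ StrictMonoOn F (Ici 0) ∧ ContinuousOn F (Ici 0) ∧ Tendsto F atTop atTop

/-- The (generalized) inverse of a φ-function, defined on `[0,∞)`. -/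
def phiInv (F : ℝ → ℝ) : ℝ → ℝ := Function.invFunOn F (Ici 0)

/-- `F̃ t = 1 / F (1 / t)` for `t > 0`, and `F̃ 0 = 0`. -/
def phiTilde (F : ℝ → ℝ) : ℝ → ℝ := fun t => if 0 < t then 1 / F (1 / t) else 0

/-- A φ-function is dilatory if `F (c₁ t) ≥ c₂ F t` for some `c₁, c₂ ∈ (1,∞)`. -/
def Dilatory (F : ℝ → ℝ) : Prop :=
  ∃ c₁ c₂ : ℝ, 1 < c₁ ∧ 1 < c₂ ∧ ∀ t : ℝ, 0 ≤ t → c₂ * F t ≤ F (c₁ * t)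

/-- `F` satisfies the Δ₂-condition if `F⁻¹` is dilatory. -/
def Delta2 (F : ℝ → ℝ) : Prop := Dilatory (phiInv F)

/-- Lower Matuszewska–Orlicz index `p_m(F)`, valued in `[0,∞]`. -/
def matLower (F : ℝ → ℝ) : ℝ≥0∞ :=
  sSup (ENNReal.ofReal ''
    {p : ℝ | ∃ c : ℝ, 0 < c ∧ ∀ t : ℝ, 0 ≤ t → ∀ a : ℝ, 1 < a → c * a ^ p * F t ≤ F (a * t)})

/-- Upper Matuszewska–Orlicz index `q_m(F)`, valued in `[0,∞]`. -/
def matUpper (F : ℝ → ℝ) : ℝ≥0∞ :=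
  sInf (ENNReal.ofReal ''
    {q : ℝ | ∃ c : ℝ, 0 < c ∧ ∀ t : ℝ, 0 ≤ t → ∀ a : ℝ, 1 < a → F (a * t) ≤ c * a ^ q * F t})

/-- Non-increasing rearrangement of a measurable function on `[0,∞)`:
`f* x = sup { t ≥ 0 : λ({|f| ≥ t}) ≥ x }`. -/
def decRearr (f : ℝ → ℂ) (x : ℝ) : ℝ :=
  sSup {t : ℝ | 0 ≤ t ∧ ENNReal.ofReal x ≤ volume {y : ℝ | 0 ≤ y ∧ t ≤ ‖f y‖}}

/-- Luxemburg functional `‖f‖_G = inf { c > 0 : ∫₀^∞ G (|f x| / c) dx ≤ 1 }`. -/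
def luxNorm (G : ℝ → ℝ) (f : ℝ → ℝ) : ℝ≥0∞ :=
  sInf (ENNReal.ofReal ''
    {c : ℝ | 0 < c ∧ ∫⁻ x in Ioi (0:ℝ), ENNReal.ofReal (G (|f x| / c)) ≤ 1})

/-- Luxemburg functional of a complex-valued function. -/
def luxNormC (G : ℝ → ℝ) (f : ℝ → ℂ) : ℝ≥0∞ :=
  luxNorm G (fun x => ‖f x‖)

/-- Orlicz–Lorentz functional `‖f‖_{F,G} = ‖f* ∘ F̃ ∘ G̃⁻¹‖_G`. -/
def olNorm (F G : ℝ → ℝ) (f : ℝ → ℂ) : ℝ≥0∞ :=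
  luxNorm G (fun x => decRearr f (phiTilde F (phiInv (phiTilde G) x)))

/-- Lower Boyd index of a rearrangement-invariant functional. -/
def boydLower (N : (ℝ → ℂ) → ℝ≥0∞) : ℝ≥0∞ :=
  sSup (ENNReal.ofReal ''
    {p : ℝ | ∃ c : ℝ, 0 < c ∧ ∀ f : ℝ → ℂ, ∀ a : ℝ, 0 < a → a < 1 →
      N (fun x => f (a * x)) ≤ ENNReal.ofReal (c * a ^ (-1 / p)) * N f})

/-- Upper Boyd index of a rearrangement-invariant functional. -/
def boydUpper (N : (ℝ → ℂ) → ℝ≥0∞) : ℝ≥0∞ :=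
  sInf (ENNReal.ofReal ''
    {q : ℝ | ∃ c : ℝ, 0 < c ∧ ∀ f : ℝ → ℂ, ∀ a : ℝ, 1 < a →
      N (fun x => f (a * x)) ≤ ENNReal.ofReal (c * a ^ (-1 / q)) * N f})

/-- Lower Zippin index of a rearrangement-invariant functional. -/
def zippinLower (N : (ℝ → ℂ) → ℝ≥0∞) : ℝ≥0∞ :=
  sSup (ENNReal.ofReal ''
    {p : ℝ | ∃ c : ℝ, 0 < c ∧ ∀ A : Set ℝ, MeasurableSet A → ∀ a : ℝ, 0 < a → a < 1 →
      N (fun x => A.indicator (fun _ => (1:ℂ)) (a * x)) ≤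
        ENNReal.ofReal (c * a ^ (-1 / p)) * N (A.indicator fun _ => (1:ℂ))})

/-- Upper Zippin index of a rearrangement-invariant functional. -/
def zippinUpper (N : (ℝ → ℂ) → ℝ≥0∞) : ℝ≥0∞ :=
  sInf (ENNReal.ofReal ''
    {q : ℝ | ∃ c : ℝ, 0 < c ∧ ∀ A : Set ℝ, MeasurableSet A → ∀ a : ℝ, 1 < a →
      N (fun x => A.indicator (fun _ => (1:ℂ)) (a * x)) ≤
        ENNReal.ofReal (c * a ^ (-1 / q)) * N (A.indicator fun _ => (1:ℂ))})

/-- Two φ-functions are equivalent: `F (c⁻¹ t) ≤ G t ≤ F (c t)`. -/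
def PhiEquiv (F G : ℝ → ℝ) : Prop :=
  ∃ c : ℝ, 0 < c ∧ ∀ t : ℝ, 0 ≤ t → F (c⁻¹ * t) ≤ G t ∧ G t ≤ F (c * t)

/-- `F ≺ G` : `G ∘ F⁻¹` is equivalent to a convex φ-function
(`F` is equivalently less convex than `G`). -/
def PhiPrec (F G : ℝ → ℝ) : Prop :=
  ∃ C : ℝ → ℝ, IsPhiFun C ∧ ConvexOn ℝ (Ici 0) C ∧ PhiEquiv (fun t => G (phiInv F t)) C

/-- An N-function: equivalent to a φ-function `H₀` with `H₀ t / t` strictly increasing,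
tending to `∞` at `∞` and to `0` at `0⁺`. -/
def IsNFun (H : ℝ → ℝ) : Prop :=
  IsPhiFun H ∧ ∃ H₀ : ℝ → ℝ, IsPhiFun H₀ ∧ PhiEquiv H H₀ ∧
    StrictMonoOn (fun t => H₀ t / t) (Ioi 0) ∧
    Tendsto (fun t => H₀ t / t) atTop atTop ∧
    Tendsto (fun t => H₀ t / t) (nhdsWithin 0 (Ioi 0)) (nhds 0)

/-- `Hs` is complementary to `H`: `c⁻¹ t ≤ H⁻¹ t · Hs⁻¹ t ≤ c t`. -/
def Complementary (H Hs : ℝ → ℝ) : Prop :=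
  ∃ c : ℝ, 0 < c ∧ ∀ t : ℝ, 0 ≤ t →
    c⁻¹ * t ≤ phiInv H t * phiInv Hs t ∧ phiInv H t * phiInv Hs t ≤ c * t

/-- Condition (J): `‖ x ↦ 1 / (H̃*)⁻¹ x ‖_{H*} < ∞` for a complementary function `H*`. -/
def CondJ (H : ℝ → ℝ) : Prop :=
  ∃ Hs : ℝ → ℝ, IsPhiFun Hs ∧ Complementary H Hs ∧
    luxNorm Hs (fun x => 1 / phiInv (phiTilde Hs) x) < ⊤

/-- A functional on measurable functions is `p`-convex. -/
def PConvex (N : (ℝ → ℂ) → ℝ≥0∞) (p : ℝ) : Prop :=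
  ∃ C : ℝ, 0 < C ∧ ∀ n : ℕ, ∀ f : Fin n → ℝ → ℂ, (∀ i, N (f i) < ⊤) →
    N (fun x => (((∑ i, ‖f i x‖ ^ p) ^ (1/p) : ℝ) : ℂ)) ≤
      ENNReal.ofReal C * (∑ i, N (f i) ^ p) ^ (1/p)

/-- A functional on measurable functions is `q`-concave. -/
def QConcave (N : (ℝ → ℂ) → ℝ≥0∞) (q : ℝ) : Prop :=
  ∃ C : ℝ, 0 < C ∧ ∀ n : ℕ, ∀ f : Fin n → ℝ → ℂ, (∀ i, N (f i) < ⊤) →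
    ENNReal.ofReal C⁻¹ * (∑ i, N (f i) ^ q) ^ (1/q) ≤
      N (fun x => (((∑ i, ‖f i x‖ ^ q) ^ (1/q) : ℝ) : ℂ))



/-- A φ-function `F` is dilatory iff `p_m(F) > 0`. -/
theorem dilatory_iff_matLower_pos (F : ℝ → ℝ) (hF : IsPhiFun F) :
    Dilatory F ↔ 0 < matLower F := by
  obtain ⟨hF0, hmono, -, -⟩ := hF
  have hFnn : ∀ t : ℝ, 0 ≤ t → 0 ≤ F t := by
    intro t ht
    rw [← hF0]
    exact hmono.monotoneOn (self_mem_Ici) ht ht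
  constructor
  · rintro ⟨c₁, c₂, hc₁, hc₂, hdil⟩
    have hc₁0 : (0:ℝ) < c₁ := lt_trans one_pos hc₁
    have hc₂0 : (0:ℝ) < c₂ := lt_trans one_pos hc₂
    set p : ℝ := Real.logb c₁ c₂ with hp
    have hppos : 0 < p := Real.logb_pos hc₁ hc₂
    have hcp : c₁ ^ p = c₂ := Real.rpow_logb hc₁0 (ne_of_gt hc₁) hc₂0
    have key : ∀ n : ℕ, ∀ t : ℝ, 0 ≤ t → c₂ ^ n * F t ≤ F (c₁ ^ n * t) := by
      intro n
      induction n with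
      | zero => intro t ht; simp
      | succ n ih =>
        intro t ht
        have h1 : 0 ≤ c₁ ^ n * t := mul_nonneg (pow_nonneg hc₁0.le n) ht
        calc c₂ ^ (n+1) * F t = c₂ * (c₂ ^ n * F t) := by ring
          _ ≤ c₂ * F (c₁ ^ n * t) := mul_le_mul_of_nonneg_left (ih t ht) hc₂0.le
          _ ≤ F (c₁ * (c₁ ^ n * t)) := hdil _ h1
          _ = F (c₁ ^ (n+1) * t) := by ring_nf
    have hmem : ENNReal.ofReal p ∈ ENNReal.ofReal ''
        {p : ℝ | ∃ c : ℝ, 0 < c ∧ ∀ t : ℝ, 0 ≤ t → ∀ a : ℝ, 1 < a →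
          c * a ^ p * F t ≤ F (a * t)} := by
      refine ⟨p, ⟨c₂⁻¹, inv_pos.mpr hc₂0, ?_⟩, rfl⟩
      intro t ht a ha
      have ha0 : (0:ℝ) < a := lt_trans one_pos ha
      set n : ℕ := ⌊Real.logb c₁ a⌋₊ with hn
      have hlogb_nonneg : 0 ≤ Real.logb c₁ a := Real.logb_nonneg hc₁ ha.le
      have h1 : (c₁:ℝ) ^ n ≤ a := by
        calc (c₁:ℝ) ^ n = c₁ ^ (n:ℝ) := (Real.rpow_natCast c₁ n).symm
          _ ≤ c₁ ^ Real.logb c₁ a :=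
              Real.rpow_le_rpow_of_exponent_le hc₁.le (Nat.floor_le hlogb_nonneg)
          _ = a := Real.rpow_logb hc₁0 (ne_of_gt hc₁) ha0
      have h2 : a ≤ (c₁:ℝ) ^ (n+1) := by
        have h := (Nat.lt_floor_add_one (Real.logb c₁ a)).le
        calc a = c₁ ^ Real.logb c₁ a := (Real.rpow_logb hc₁0 (ne_of_gt hc₁) ha0).symm
          _ ≤ c₁ ^ (((n:ℕ):ℝ)+1) :=
              Real.rpow_le_rpow_of_exponent_le hc₁.le (by exact_mod_cast h)
          _ = c₁ ^ (((n+1:ℕ)):ℝ) := by push_cast; ring_nf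
          _ = (c₁:ℝ) ^ (n+1) := Real.rpow_natCast c₁ (n+1)
      have hap : a ^ p ≤ c₂ ^ (n+1) := by
        calc a ^ p ≤ ((c₁:ℝ) ^ (n+1)) ^ p :=
              Real.rpow_le_rpow ha0.le h2 hppos.le
          _ = (c₁ ^ (((n+1:ℕ)):ℝ)) ^ p := by rw [Real.rpow_natCast]
          _ = c₁ ^ ((((n+1:ℕ)):ℝ) * p) := by
              rw [← Real.rpow_mul hc₁0.le]
          _ = c₁ ^ (p * (((n+1:ℕ)):ℝ)) := by rw [mul_comm]
          _ = (c₁ ^ p) ^ (((n+1:ℕ)):ℝ) := by rw [Real.rpow_mul hc₁0.le]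
          _ = c₂ ^ (((n+1:ℕ)):ℝ) := by rw [hcp]
          _ = c₂ ^ (n+1) := Real.rpow_natCast c₂ (n+1)
      have hfin : c₁ ^ n * t ≤ a * t := mul_le_mul_of_nonneg_right h1 ht
      have h3 : F (c₁ ^ n * t) ≤ F (a * t) :=
        hmono.monotoneOn (mem_Ici.mpr (mul_nonneg (pow_nonneg hc₁0.le n) ht))
          (mem_Ici.mpr (mul_nonneg ha0.le ht)) hfin
      calc c₂⁻¹ * a ^ p * F t ≤ c₂⁻¹ * c₂ ^ (n+1) * F t := by
            apply mul_le_mul_of_nonneg_right _ (hFnn t ht)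
            exact mul_le_mul_of_nonneg_left hap (inv_pos.mpr hc₂0).le
        _ = c₂ ^ n * F t := by
            field_simp [pow_succ]
            ring
        _ ≤ F (c₁ ^ n * t) := key n t ht
        _ ≤ F (a * t) := h3
    calc (0:ℝ≥0∞) < ENNReal.ofReal p := ENNReal.ofReal_pos.mpr hppos
      _ ≤ matLower F := le_sSup hmem
  · intro hpos
    rw [matLower, lt_sSup_iff] at hpos
    obtain ⟨b, ⟨p, ⟨c, hc, hprop⟩, rfl⟩, hb⟩ := hpos
    have hppos : 0 < p := ENNReal.ofReal_pos.mp hb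
    set a : ℝ := max 2 ((2 / c) ^ p⁻¹) with hadef
    have ha2 : (2:ℝ) ≤ a := le_max_left _ _
    have ha1 : (1:ℝ) < a := lt_of_lt_of_le one_lt_two ha2
    have hbase : (0:ℝ) ≤ (2 / c) ^ p⁻¹ := Real.rpow_nonneg (by positivity) _
    have hap : 2 / c ≤ a ^ p := by
      calc 2 / c = ((2 / c) ^ p⁻¹) ^ p :=
            (Real.rpow_inv_rpow (by positivity) hppos.ne').symm
        _ ≤ a ^ p := Real.rpow_le_rpow hbase (le_max_right _ _) hppos.le
    refine ⟨a, 2, ha1, one_lt_two, ?_⟩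
    intro t ht
    have h1 : c * a ^ p * F t ≤ F (a * t) := hprop t ht a ha1
    have h2 : 2 * F t ≤ c * a ^ p * F t := by
      apply mul_le_mul_of_nonneg_right _ (hFnn t ht)
      calc (2:ℝ) = c * (2 / c) := by field_simp
        _ ≤ c * a ^ p := mul_le_mul_of_nonneg_left hap hc.le
    linarith

end
end

section
/- A φ-function F satisfies the Δ₂-condition if and only if its upper Matuszewska–Orlicz index satisfies q_m(F) < ∞. -/
open MeasureTheory Set Filter Topology
open scoped ENNReal NNReal

noncomputable section

private lemma phiFun_nonneg {F : ℝ → ℝ} (hF : IsPhiFun F) {s : ℝ} (hs : 0 ≤ s) : 0 ≤ F s := by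
  obtain ⟨h0, hmono, -, -⟩ := hF
  simpa [h0] using hmono.monotoneOn self_mem_Ici hs hs

private lemma phiFun_surj {F : ℝ → ℝ} (hF : IsPhiFun F) {y : ℝ} (hy : 0 ≤ y) :
    y ∈ F '' (Ici 0) := by
  obtain ⟨h0, hmono, hcont, htop⟩ := hF
  obtain ⟨b, hb1, hb0⟩ := ((htop.eventually_ge_atTop y).and (eventually_ge_atTop (0:ℝ))).exists
  have hy' : y ∈ Icc (F 0) (F b) := ⟨by simpa [h0] using hy, hb1⟩
  obtain ⟨x, hx, hxy⟩ :=
    intermediate_value_Icc hb0 (hcont.mono Icc_subset_Ici_self) hy'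
  exact ⟨x, hx.1, hxy⟩

private lemma phiInv_F {F : ℝ → ℝ} (hF : IsPhiFun F) {x : ℝ} (hx : 0 ≤ x) :
    phiInv F (F x) = x := hF.2.1.injOn.leftInvOn_invFunOn hx

private lemma F_phiInv {F : ℝ → ℝ} (hF : IsPhiFun F) {y : ℝ} (hy : 0 ≤ y) :
    F (phiInv F y) = y := Function.invFunOn_eq (phiFun_surj hF hy)

private lemma phiInv_nonneg {F : ℝ → ℝ} (hF : IsPhiFun F) {y : ℝ} (hy : 0 ≤ y) :
    (0:ℝ) ≤ phiInv F y := Function.invFunOn_mem (phiFun_surj hF hy)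

private lemma delta2_iff_doubling {F : ℝ → ℝ} (hF : IsPhiFun F) :
    Delta2 F ↔ ∃ c₁ c₂ : ℝ, 1 < c₁ ∧ 1 < c₂ ∧ ∀ s : ℝ, 0 ≤ s → F (c₂ * s) ≤ c₁ * F s := by
  constructor
  · rintro ⟨c₁, c₂, hc₁, hc₂, h⟩
    refine ⟨c₁, c₂, hc₁, hc₂, fun s hs => ?_⟩
    have hFs := phiFun_nonneg hF hs
    have h1 := h (F s) hFs
    rw [phiInv_F hF hs] at h1
    have hc1Fs : (0:ℝ) ≤ c₁ * F s := mul_nonneg (by linarith) hFs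
    have h2 : F (c₂ * s) ≤ F (phiInv F (c₁ * F s)) :=
      hF.2.1.monotoneOn (mul_nonneg (by linarith) hs) (phiInv_nonneg hF hc1Fs) h1
    rwa [F_phiInv hF hc1Fs] at h2
  · rintro ⟨c₁, c₂, hc₁, hc₂, h⟩
    refine ⟨c₁, c₂, hc₁, hc₂, fun t ht => ?_⟩
    have hIt := phiInv_nonneg hF ht
    have h1 := h (phiInv F t) hIt
    rw [F_phiInv hF ht] at h1
    have hc1t : (0:ℝ) ≤ c₁ * t := mul_nonneg (by linarith) ht
    rw [← F_phiInv hF hc1t] at h1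
    exact (hF.2.1.le_iff_le (mul_nonneg (by linarith) hIt) (phiInv_nonneg hF hc1t)).mp h1

private lemma sInf_ofReal_lt_top {S : Set ℝ} :
    sInf (ENNReal.ofReal '' S) < ⊤ ↔ S.Nonempty := by
  constructor
  · intro h
    rcases S.eq_empty_or_nonempty with he | hn
    · simp [he] at h
    · exact hn
  · rintro ⟨q, hq⟩
    exact lt_of_le_of_lt (sInf_le (mem_image_of_mem _ hq)) ENNReal.ofReal_lt_top

/-- A φ-function `F` satisfies the Δ₂-condition iff `q_m(F) < ∞`. -/
theorem delta2_iff_matUpper_lt_top (F : ℝ → ℝ) (hF : IsPhiFun F) :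
    Delta2 F ↔ matUpper F < ⊤ := by
  rw [delta2_iff_doubling hF, matUpper, sInf_ofReal_lt_top]
  constructor
  · rintro ⟨c₁, c₂, hc₁, hc₂, h⟩
    refine ⟨Real.log c₁ / Real.log c₂, c₁, by linarith, fun t ht a ha => ?_⟩
    have hlc₂ : 0 < Real.log c₂ := Real.log_pos hc₂
    have hla : 0 < Real.log a := Real.log_pos ha
    set n : ℕ := ⌈Real.log a / Real.log c₂⌉₊ with hn
    have key : ∀ m : ℕ, ∀ s : ℝ, 0 ≤ s → F (c₂ ^ m * s) ≤ c₁ ^ m * F s := by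
      intro m
      induction m with
      | zero => intro s hs; simp
      | succ m ih =>
        intro s hs
        have hcs : (0:ℝ) ≤ c₂ * s := mul_nonneg (by linarith) hs
        calc F (c₂ ^ (m+1) * s) = F (c₂ ^ m * (c₂ * s)) := by ring_nf
          _ ≤ c₁ ^ m * F (c₂ * s) := ih _ hcs
          _ ≤ c₁ ^ m * (c₁ * F s) := by
              have h2 := h s hs
              have h3 : (0:ℝ) < c₁ ^ m := pow_pos (by linarith) m
              nlinarith
          _ = c₁ ^ (m+1) * F s := by ring
    have hac : a ≤ c₂ ^ n := by
      have e1 : c₂ ^ ((Real.log a / Real.log c₂ : ℝ)) = a := by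
        rw [Real.rpow_def_of_pos (show (0:ℝ) < c₂ by linarith),
          show Real.log c₂ * (Real.log a / Real.log c₂) = Real.log a by field_simp]
        exact Real.exp_log (by linarith)
      calc a = c₂ ^ ((Real.log a / Real.log c₂ : ℝ)) := e1.symm
        _ ≤ c₂ ^ ((n : ℕ) : ℝ) :=
            (Real.rpow_le_rpow_left_iff hc₂).mpr (Nat.le_ceil _)
        _ = c₂ ^ n := Real.rpow_natCast _ _
    have hq : a ^ (Real.log c₁ / Real.log c₂) =
        Real.exp (Real.log a * (Real.log c₁ / Real.log c₂)) :=
      Real.rpow_def_of_pos (by linarith) _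
    have hcn : (c₁:ℝ) ^ n ≤ c₁ * a ^ (Real.log c₁ / Real.log c₂) := by
      calc (c₁:ℝ) ^ n = c₁ ^ ((n : ℕ) : ℝ) := (Real.rpow_natCast _ _).symm
        _ ≤ c₁ ^ ((Real.log a / Real.log c₂) + 1) := by
            refine (Real.rpow_le_rpow_left_iff hc₁).mpr ?_
            exact (Nat.ceil_lt_add_one (by positivity)).le
        _ = c₁ ^ ((Real.log a / Real.log c₂ : ℝ)) * c₁ := by
            rw [Real.rpow_add (by linarith), Real.rpow_one]
        _ = c₁ * a ^ (Real.log c₁ / Real.log c₂) := by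
            rw [Real.rpow_def_of_pos (show (0:ℝ) < c₁ by linarith),
              show Real.log c₁ * (Real.log a / Real.log c₂)
                = Real.log a * (Real.log c₁ / Real.log c₂) by ring, ← hq]
            ring
    have hFt := phiFun_nonneg hF ht
    have hat : (0:ℝ) ≤ a * t := mul_nonneg (by linarith) ht
    have hcnt : (0:ℝ) ≤ c₂ ^ n * t := mul_nonneg (by positivity) ht
    calc F (a * t) ≤ F (c₂ ^ n * t) :=
          hF.2.1.monotoneOn hat hcnt (mul_le_mul_of_nonneg_right hac ht)
      _ ≤ c₁ ^ n * F t := key n t ht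
      _ ≤ c₁ * a ^ (Real.log c₁ / Real.log c₂) * F t :=
          mul_le_mul_of_nonneg_right hcn hFt
  · rintro ⟨q, c, hc, h⟩
    refine ⟨max (c * 2 ^ q) 2, 2, lt_of_lt_of_le one_lt_two (le_max_right _ _),
      one_lt_two, fun s hs => ?_⟩
    have h1 := h s hs 2 one_lt_two
    have hFs := phiFun_nonneg hF hs
    calc F (2 * s) ≤ c * 2 ^ q * F s := h1
      _ ≤ max (c * 2 ^ q) 2 * F s :=
          mul_le_mul_of_nonneg_right (le_max_left _ _) hFs

end
end
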